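/- If R and S are binary relations on a set A such that R^* ∘ S is well-founded and R is well-founded, then R ∪ S is well-founded on A. Conversely, if R ∪ S is well-founded then R^* ∘ S is well-founded. -/

import Mathlib

/-- A relation terminates iff there is no infinite chain, i.e. its flip is well-founded. -/
def Terminating {α : Type _} (r : α → α → Prop) : Prop := WellFounded (fun a b => r b a)

/-- If R^* ∘ S and R are well-founded then R ∪ S is well-founded; conversely, if
R ∪ S is well-founded then R^* ∘ S is well-founded. -/
theorem union_wf_iff_comp_wf
    (A : Type) (R S : A → A → Prop) :
    ((Terminating (fun a c => ∃ b, Relation.ReflTransGen R a b ∧ S b c) ∧ Terminating R) →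
      Terminating (fun a b => R a b ∨ S a b)) ∧
    (Terminating (fun a b => R a b ∨ S a b) →
      Terminating (fun a c => ∃ b, Relation.ReflTransGen R a b ∧ S b c)) := by
  constructor
  · rintro ⟨hT, hR⟩
    constructor
    intro a
    induction a using hT.induction with
    | _ a IH1 =>
      have key : ∀ x, Relation.ReflTransGen R a x →
          Acc (fun a b => (R b a ∨ S b a)) x := by
        intro x
        induction x using hR.induction with
        | _ x IH2 =>
          intro hax
          constructor
          intro y hy
          rcases hy with hy | hy
          · exact IH2 y hy (hax.tail hy)
          · exact IH1 y ⟨x, hax, hy⟩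
      exact key a Relation.ReflTransGen.refl
  · intro hU
    have hUT : WellFounded (Relation.TransGen (fun a b : A => R b a ∨ S b a)) :=
      hU.transGen
    apply Subrelation.wf (r := Relation.TransGen (fun a b : A => R b a ∨ S b a))
    · rintro c a ⟨b, hab, hbc⟩
      have : Relation.TransGen (fun a b => R a b ∨ S a b) a c := by
        have h1 : Relation.ReflTransGen (fun a b => R a b ∨ S a b) a b :=
          Relation.ReflTransGen.mono (fun _ _ h => Or.inl h) _ _ hab
        exact Relation.TransGen.trans_right h1 (Relation.TransGen.single (Or.inr hbc))
      exact (Relation.transGen_swap.mpr this)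
    · exact hUT
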